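/- For M > 0 and v ∈ ℝ², the function H(x,t) = t^{-1/2}(M - ‖x + 2vt‖²/(16 t^{1/2})) satisfies ∂ₜH - 2∇·(H∇H) - 2v·∇H = 0 at every point (x,t) with t > 0 where H(x,t) > 0. -/

import Mathlib

noncomputable section

def pd1 (f : ℝ → ℝ → ℝ → ℝ) (x y t : ℝ) : ℝ := deriv (fun s => f s y t) x
def pd2 (f : ℝ → ℝ → ℝ → ℝ) (x y t : ℝ) : ℝ := deriv (fun s => f x s t) y
def pdt (f : ℝ → ℝ → ℝ → ℝ) (x y t : ℝ) : ℝ := deriv (fun s => f x y s) t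

/-- The shifted Barenblatt profile
`H(x,t) = t^{-1/2} (M - ‖x + 2vt‖²/(16 t^{1/2}))` satisfies
`∂ₜH - 2∇·(H∇H) - 2v·∇H = 0` wherever `t > 0` and `H > 0`. -/
theorem barenblatt_inclined_plane (M : ℝ) (hM : 0 < M) (v1 v2 : ℝ)
    (H : ℝ → ℝ → ℝ → ℝ)
    (hH : ∀ x y t, H x y t =
      (M - ((x + 2 * v1 * t) ^ 2 + (y + 2 * v2 * t) ^ 2) / (16 * Real.sqrt t)) / Real.sqrt t) :
    ∀ x y t, 0 < t → 0 < H x y t →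
      pdt H x y t
        - 2 * ((pd1 H x y t) ^ 2 + (pd2 H x y t) ^ 2
            + H x y t * (pd1 (pd1 H) x y t + pd2 (pd2 H) x y t))
        - 2 * (v1 * pd1 H x y t + v2 * pd2 H x y t) = 0 := by
  intro x y t ht _
  obtain ⟨st, hstpos, rfl⟩ : ∃ s : ℝ, 0 < s ∧ t = s ^ 2 :=
    ⟨Real.sqrt t, Real.sqrt_pos.2 ht, (Real.sq_sqrt ht.le).symm⟩
  have hst0 : st ≠ 0 := hstpos.ne'
  have hsqrt : Real.sqrt (st ^ 2) = st := Real.sqrt_sq hstpos.le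
  -- first spatial derivative in x
  have hpd1 : ∀ x' : ℝ, pd1 H x' y (st ^ 2) = -(x' + 2 * v1 * st ^ 2) / (8 * st ^ 2) := by
    intro x'
    have hfun : (fun s => H s y (st ^ 2)) = fun s =>
        (M - ((s + 2 * v1 * st ^ 2) ^ 2 + (y + 2 * v2 * st ^ 2) ^ 2) / (16 * Real.sqrt (st ^ 2)))
          / Real.sqrt (st ^ 2) := funext fun s => hH s y (st ^ 2)
    have hd : HasDerivAt (fun s =>
        (M - ((s + 2 * v1 * st ^ 2) ^ 2 + (y + 2 * v2 * st ^ 2) ^ 2) / (16 * Real.sqrt (st ^ 2)))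
          / Real.sqrt (st ^ 2)) (-(x' + 2 * v1 * st ^ 2) / (8 * st ^ 2)) x' := by
      have h1 := (((((hasDerivAt_id x').add_const (2 * v1 * st ^ 2)).pow 2).add_const
        ((y + 2 * v2 * st ^ 2) ^ 2)).div_const (16 * Real.sqrt (st ^ 2))).const_sub M
      have h2 := h1.div_const (Real.sqrt (st ^ 2))
      refine h2.congr_deriv ?_
      simp only [id]
      rw [hsqrt]
      field_simp
      ring
    rw [pd1, hfun, hd.deriv]
  -- first spatial derivative in y
  have hpd2 : ∀ y' : ℝ, pd2 H x y' (st ^ 2) = -(y' + 2 * v2 * st ^ 2) / (8 * st ^ 2) := by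
    intro y'
    have hfun : (fun s => H x s (st ^ 2)) = fun s =>
        (M - ((x + 2 * v1 * st ^ 2) ^ 2 + (s + 2 * v2 * st ^ 2) ^ 2) / (16 * Real.sqrt (st ^ 2)))
          / Real.sqrt (st ^ 2) := funext fun s => hH x s (st ^ 2)
    have hd : HasDerivAt (fun s =>
        (M - ((x + 2 * v1 * st ^ 2) ^ 2 + (s + 2 * v2 * st ^ 2) ^ 2) / (16 * Real.sqrt (st ^ 2)))
          / Real.sqrt (st ^ 2)) (-(y' + 2 * v2 * st ^ 2) / (8 * st ^ 2)) y' := by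
      have h1 := ((((((hasDerivAt_id y').add_const (2 * v2 * st ^ 2)).pow 2).const_add
        ((x + 2 * v1 * st ^ 2) ^ 2)).div_const (16 * Real.sqrt (st ^ 2))).const_sub M)
      have h2 := h1.div_const (Real.sqrt (st ^ 2))
      refine h2.congr_deriv ?_
      simp only [id]
      rw [hsqrt]
      field_simp
      ring
    rw [pd2, hfun, hd.deriv]
  -- second spatial derivatives
  have hpd11 : pd1 (pd1 H) x y (st ^ 2) = -1 / (8 * st ^ 2) := by
    have hfun : (fun s => pd1 H s y (st ^ 2)) = fun s =>
        -(s + 2 * v1 * st ^ 2) / (8 * st ^ 2) := funext fun s => hpd1 s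
    have hd : HasDerivAt (fun s => -(s + 2 * v1 * st ^ 2) / (8 * st ^ 2))
        (-1 / (8 * st ^ 2)) x := by
      have := (((hasDerivAt_id x).add_const (2 * v1 * st ^ 2)).neg).div_const (8 * st ^ 2)
      simpa using this
    rw [pd1, hfun, hd.deriv]
  have hpd22 : pd2 (pd2 H) x y (st ^ 2) = -1 / (8 * st ^ 2) := by
    have hfun : (fun s => pd2 H x s (st ^ 2)) = fun s =>
        -(s + 2 * v2 * st ^ 2) / (8 * st ^ 2) := funext fun s => hpd2 s
    have hd : HasDerivAt (fun s => -(s + 2 * v2 * st ^ 2) / (8 * st ^ 2))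
        (-1 / (8 * st ^ 2)) y := by
      have := (((hasDerivAt_id y).add_const (2 * v2 * st ^ 2)).neg).div_const (8 * st ^ 2)
      simpa using this
    rw [pd2, hfun, hd.deriv]
  -- time derivative
  have hpdt : pdt H x y (st ^ 2) =
      -M / (2 * st ^ 2 * st) - (v1 * (x + 2 * v1 * st ^ 2) + v2 * (y + 2 * v2 * st ^ 2)) / (4 * st ^ 2)
        + ((x + 2 * v1 * st ^ 2) ^ 2 + (y + 2 * v2 * st ^ 2) ^ 2) / (16 * (st ^ 2) ^ 2) := by
    have hfun : (fun s => H x y s) = fun s =>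
        (M - ((x + 2 * v1 * s) ^ 2 + (y + 2 * v2 * s) ^ 2) / (16 * Real.sqrt s)) / Real.sqrt s :=
      funext fun s => hH x y s
    have htpos : (0:ℝ) < st ^ 2 := by positivity
    have hsq := Real.hasDerivAt_sqrt htpos.ne'
    have hA : HasDerivAt (fun s => (x + 2 * v1 * s) ^ 2)
        (2 * (x + 2 * v1 * st ^ 2) ^ 1 * (2 * v1 * 1)) (st ^ 2) :=
      (((hasDerivAt_id (st ^ 2)).const_mul (2 * v1)).const_add x).pow 2
    have hB : HasDerivAt (fun s => (y + 2 * v2 * s) ^ 2)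
        (2 * (y + 2 * v2 * st ^ 2) ^ 1 * (2 * v2 * 1)) (st ^ 2) :=
      (((hasDerivAt_id (st ^ 2)).const_mul (2 * v2)).const_add y).pow 2
    have hden : HasDerivAt (fun s => 16 * Real.sqrt s)
        (16 * (1 / (2 * Real.sqrt (st ^ 2)))) (st ^ 2) := hsq.const_mul 16
    have hden0 : 16 * Real.sqrt (st ^ 2) ≠ 0 := by rw [hsqrt]; positivity
    have hsq0 : Real.sqrt (st ^ 2) ≠ 0 := by rw [hsqrt]; exact hst0
    have hfrac := (hA.add hB).div hden hden0
    have hg := (hfrac.const_sub M).div hsq hsq0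
    rw [pdt, hfun]
    refine hg.deriv.trans ?_
    simp only [Pi.add_apply, Pi.div_apply]
    rw [hsqrt]
    field_simp
    ring
  rw [hpdt, hpd1 x, hpd2 y, hpd11, hpd22, hH x y (st ^ 2), hsqrt]
  field_simp
  ring
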